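/- For β ∈ {12★, 1★3, ★23}: under 123 ↔ β, every equivalence class contains exactly one 123-avoiding permutation. Equivalently, for each 123-avoiding permutation τ the set of all permutations whose primitive permutation under 123 ↔ β is τ forms an equivalence class, these classes are pairwise distinct, and every permutation lies in exactly one of them. -/

import Mathlib

/-!
Pattern-replacement equivalences between permutations of different lengths
(arXiv:1309.4802). A ★-pattern is encoded as a `List (Option ℕ)`, where `none`
is the placeholder ★ and `some k` an integer entry.
-/

/-- A ★-pattern / star-string entry: `none` is ★, `some k` an integer `k`. -/
abbrev SPat := List (Option ℕ)

/-- The integer entries of a star-string, in order. -/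
def ints (ρ : SPat) : List ℕ := ρ.filterMap id

/-- Two lists of naturals are order-isomorphic. -/
def OrdIso (u v : List ℕ) : Prop :=
  u.length = v.length ∧
  ∀ i j, i < u.length → j < u.length → (u.getD i 0 < u.getD j 0 ↔ v.getD i 0 < v.getD j 0)

/-- A valid string of distinct positive integers and ★'s. -/
def StarStr (ρ : SPat) : Prop := (ints ρ).Nodup ∧ ∀ k ∈ ints ρ, 0 < k

/-- `r` (entry by entry) forms a copy of the ★-pattern `δ`: ★'s in the same
positions, and the integer entries order-isomorphic. -/
def IsCopy (r δ : SPat) : Prop :=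
  r.length = δ.length ∧
  (∀ i, (r.getD i none = none ↔ δ.getD i none = none)) ∧
  OrdIso (ints r) (ints δ)

/-- `Repl a b ρ₁ ρ₂` : `ρ₂` is obtained from `ρ₁` by replacing an occurrence of `a`
as a (not necessarily contiguous) substring of `ρ₁` by `b`, entry by entry at the
same positions. -/
inductive Repl : SPat → SPat → SPat → SPat → Prop
  | nil : Repl [] [] [] []
  | keep {a b ρ₁ ρ₂} (x : Option ℕ) : Repl a b ρ₁ ρ₂ → Repl a b (x :: ρ₁) (x :: ρ₂)
  | repl {a b ρ₁ ρ₂} (x y : Option ℕ) :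
      Repl a b ρ₁ ρ₂ → Repl (x :: a) (y :: b) (x :: ρ₁) (y :: ρ₂)

/-- `π` is a permutation of `1, …, n` (as a list). -/
def IsPermList (π : List ℕ) : Prop := π.Perm (List.range' 1 π.length)

/-- `σ` is a result of the replacement `α → β` applied to the permutation `π`:
(1) `ρ₁` is `π` renumbered (order-isomorphically) with ★'s inserted anywhere;
(2) a substring `a` of `ρ₁` forming a copy of `α` is replaced (in place) by a
string `b` that is a copy of `β`, whose integers meet `ρ₁` only inside `a`, and
which agrees with `a` on the integer entries common to `α` and `β`;
(3) dropping ★'s and renumbering gives the permutation `σ`. -/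
def IsResult (α β : SPat) (π σ : List ℕ) : Prop :=
  ∃ ρ₁ ρ₂ a b : SPat,
    StarStr ρ₁ ∧ OrdIso π (ints ρ₁) ∧
    IsCopy a α ∧
    StarStr b ∧ IsCopy b β ∧
    (∀ k ∈ ints b, k ∈ ints ρ₁ → k ∈ ints a) ∧
    (∀ i j x, α.getD i none = some x → β.getD j none = some x →
      a.getD i none = b.getD j none) ∧
    Repl a b ρ₁ ρ₂ ∧
    IsPermList σ ∧ OrdIso (ints ρ₂) σ

/-- Equivalence under the bidirectional replacement `α ↔ β`: a finite sequence
of `α → β` and `β → α` replacements. -/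
def PermEquiv (α β : SPat) (π σ : List ℕ) : Prop :=
  Relation.ReflTransGen (fun τ υ => IsResult α β τ υ ∨ IsResult β α τ υ) π σ

/-- `π` is isolated under `α ↔ β`: no other permutation is equivalent to it. -/
def Isolated (α β : SPat) (π : List ℕ) : Prop :=
  ∀ σ : List ℕ, IsPermList σ → PermEquiv α β π σ → σ = π

/-- The identity permutation `1 2 ⋯ n`. -/
def idPerm (n : ℕ) : List ℕ := List.range' 1 n

/-- The reverse identity permutation `n (n-1) ⋯ 1`. -/
def ridPerm (n : ℕ) : List ℕ := (List.range' 1 n).reverse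

def pat123 : SPat := [some 1, some 2, some 3]
def pat132 : SPat := [some 1, some 3, some 2]
def patS32 : SPat := [none, some 3, some 2]
def pat3S2 : SPat := [some 3, none, some 2]
def pat32S : SPat := [some 3, some 2, none]
def patS31 : SPat := [none, some 3, some 1]
def pat3S1 : SPat := [some 3, none, some 1]
def pat31S : SPat := [some 3, some 1, none]
def patS21 : SPat := [none, some 2, some 1]
def pat2S1 : SPat := [some 2, none, some 1]
def pat21S : SPat := [some 2, some 1, none]
def pat12S : SPat := [some 1, some 2, none]
def pat1S3 : SPat := [some 1, none, some 3]
def patS23 : SPat := [none, some 2, some 3]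
def patS12 : SPat := [none, some 1, some 2]
def pat23S : SPat := [some 2, some 3, none]
def pat13S : SPat := [some 1, some 3, none]
def pat1S2 : SPat := [some 1, none, some 2]

/-- `l` contains a (not necessarily contiguous) copy of the pattern `123`. -/
def contains123 (l : List ℕ) : Prop :=
  ∃ i j k, i < j ∧ j < k ∧ k < l.length ∧
    l.getD i 0 < l.getD j 0 ∧ l.getD j 0 < l.getD k 0

/-- All copies of `123` in `l` (as triples of 0-indexed positions), listed in
lexicographic order: first by position of the smallest element, then of the
middle element, then of the largest element. -/
def triples123 (l : List ℕ) : List (ℕ × ℕ × ℕ) :=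
  (List.range l.length).flatMap fun i =>
    (List.range l.length).flatMap fun j =>
      (List.range l.length).filterMap fun k =>
        if i < j ∧ j < k ∧ l.getD i 0 < l.getD j 0 ∧ l.getD j 0 < l.getD k 0
        then some (i, j, k) else none

/-- The leftmost copy of `123` in `l`, if any. -/
def leftmost123 (l : List ℕ) : Option (ℕ × ℕ × ℕ) := (triples123 l).head?

/-- Repeatedly (with fuel) erase, from the leftmost copy of `123`, the entry at
the position selected by `d`, until no copy of `123` remains. -/
def pIter (d : ℕ × ℕ × ℕ → ℕ) : ℕ → List ℕ → List ℕ
  | 0, l => l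
  | n + 1, l =>
    match leftmost123 l with
    | none => l
    | some t => pIter d n (l.eraseIdx (d t))

/-- Renumber a list of distinct naturals, preserving relative order, into a
permutation of `1, …, n`. -/
def renumber (l : List ℕ) : List ℕ := l.map fun x => (l.filter fun y => y ≤ x).length

def pGamma (d : ℕ × ℕ × ℕ → ℕ) (l : List ℕ) : List ℕ := renumber (pIter d l.length l)

/-- `p_γ` for `γ = 12★`: repeatedly delete the largest element of the leftmost
copy of `123`, then renumber. -/
def p12star (l : List ℕ) : List ℕ := pGamma (fun t => t.2.2) l

/-- `p_γ` for `γ = 1★3`: repeatedly delete the middle element of the leftmost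
copy of `123`, then renumber. -/
def p1star3 (l : List ℕ) : List ℕ := pGamma (fun t => t.2.1) l


/-! ### Auxiliary lemmas -/

namespace Aux

theorem ordIso_refl (u : List ℕ) : OrdIso u u := ⟨rfl, fun _ _ _ _ => Iff.rfl⟩

theorem ordIso_symm {u v : List ℕ} (h : OrdIso u v) : OrdIso v u := by
  obtain ⟨hl, hiff⟩ := h
  exact ⟨hl.symm, fun i j hi hj => (hiff i j (hl ▸ hi) (hl ▸ hj)).symm⟩

theorem ordIso_trans {u v w : List ℕ} (h1 : OrdIso u v) (h2 : OrdIso v w) : OrdIso u w := by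
  obtain ⟨hl1, hi1⟩ := h1
  obtain ⟨hl2, hi2⟩ := h2
  exact ⟨hl1.trans hl2, fun i j hi hj =>
    (hi1 i j hi hj).trans (hi2 i j (hl1 ▸ hi) (hl1 ▸ hj))⟩

theorem permList_nodup {π : List ℕ} (h : IsPermList π) : π.Nodup :=
  h.nodup_iff.mpr (List.nodup_range' (s := 1) (n := π.length))

theorem permList_mem {π : List ℕ} (h : IsPermList π) {k : ℕ} (hk : k ∈ π) :
    1 ≤ k ∧ k < 1 + π.length := by
  have := h.mem_iff.mp hk
  rwa [List.mem_range'_1] at this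

theorem countP_range' (n x : ℕ) (h1 : 1 ≤ x) (h2 : x ≤ n + 1) :
    (List.range' 1 n).countP (fun y => y < x) = x - 1 := by
  induction n with
  | zero => simp at h2 ⊢; omega
  | succ n ih =>
    rw [List.range'_1_concat, List.countP_append]
    by_cases hx : x ≤ n + 1
    · rw [ih hx]
      have : ¬ (1 + n < x) := by omega
      simp [this]
    · have hx' : x = n + 2 := by omega
      subst hx'
      have hall : (List.range' 1 n).countP (fun y => y < n + 2) = n := by
        have hforall : ∀ a ∈ List.range' 1 n, (fun y => decide (y < n + 2)) a = true := by
          intro a ha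
          have := List.mem_range'_1.mp ha
          simp; omega
        rw [List.countP_eq_length.mpr hforall, List.length_range']
      rw [hall]
      have h1n : 1 + n < n + 2 := by omega
      simp [List.countP_cons, h1n]

theorem countP_pos_range (l : List ℕ) (p : ℕ → Bool) :
    (List.range l.length).countP (fun j => p (l.getD j 0)) = l.countP p := by
  induction l with
  | nil => simp
  | cons a t ih =>
    rw [List.length_cons, List.range_succ_eq_map, List.countP_cons, List.countP_map,
      List.countP_cons]
    simp only [List.getD_cons_zero, List.getD_cons_succ, Function.comp_def]
    rw [← ih]
    try simp [Nat.add_comm]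

theorem permList_getD {σ : List ℕ} (h : IsPermList σ) {i : ℕ} (hi : i < σ.length) :
    σ.getD i 0 = σ.countP (fun y => y < σ.getD i 0) + 1 := by
  have hmem : σ.getD i 0 ∈ σ := by
    rw [List.getD_eq_getElem _ _ hi]; exact List.getElem_mem _
  have hb := permList_mem h hmem
  rw [h.countP_eq, countP_range' _ _ hb.1 (by omega)]
  omega

theorem permList_unique {σ σ' : List ℕ} (h : IsPermList σ) (h' : IsPermList σ')
    (hoi : OrdIso σ σ') : σ = σ' := by
  obtain ⟨hl, hiff⟩ := hoi
  apply List.ext_getElem hl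
  intro i hi hi'
  have e1 := permList_getD h hi
  have e2 := permList_getD h' hi'
  have key : σ.countP (fun y => y < σ.getD i 0) = σ'.countP (fun y => y < σ'.getD i 0) := by
    rw [← countP_pos_range σ (fun y => decide (y < σ.getD i 0)),
      ← countP_pos_range σ' (fun y => decide (y < σ'.getD i 0)), ← hl]
    apply List.countP_congr
    intro j hj
    have hjlt : j < σ.length := List.mem_range.mp hj
    rw [decide_eq_true_eq, decide_eq_true_eq]
    exact hiff j i hjlt hi
  rw [← List.getD_eq_getElem _ _ hi, ← List.getD_eq_getElem _ _ hi', e1, e2, key]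

end Aux

namespace Aux

/-! ### renumber produces a permutation order-isomorphic to the input -/

theorem rankPos {l : List ℕ} {x : ℕ} (hx : x ∈ l) :
    0 < (l.filter fun y => y ≤ x).length :=
  List.length_pos_of_mem (List.mem_filter.mpr ⟨hx, by simp⟩)

theorem rankLe {l : List ℕ} (x : ℕ) : (l.filter fun y => y ≤ x).length ≤ l.length :=
  List.length_filter_le _ _

theorem rankLt {l : List ℕ} {x y : ℕ} (hxy : x < y) (hy : y ∈ l) :
    (l.filter fun z => z ≤ x).length < (l.filter fun z => z ≤ y).length := by
  obtain ⟨s, t, rfl⟩ := List.append_of_mem hy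
  have hmono : ∀ (m : List ℕ), (m.filter fun z => z ≤ x).length ≤ (m.filter fun z => z ≤ y).length := by
    intro m
    rw [← List.countP_eq_length_filter, ← List.countP_eq_length_filter]
    apply List.countP_mono_left
    intro a _ ha
    simp at ha ⊢
    omega
  have hyx : ¬ (y ≤ x) := by omega
  simp only [List.filter_append, List.filter_cons, List.length_append]
  simp [hyx]
  have := hmono s
  have := hmono t
  omega

theorem rankInj {l : List ℕ} {x y : ℕ} (hx : x ∈ l) (hy : y ∈ l)
    (h : (l.filter fun z => z ≤ x).length = (l.filter fun z => z ≤ y).length) : x = y := by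
  rcases lt_trichotomy x y with h1 | h1 | h1
  · exact absurd h (Nat.ne_of_lt (rankLt h1 hy))
  · exact h1
  · exact absurd h.symm (Nat.ne_of_lt (rankLt h1 hx))

theorem rankLt_iff {l : List ℕ} {x y : ℕ} (hx : x ∈ l) (hy : y ∈ l) :
    x < y ↔ (l.filter fun z => z ≤ x).length < (l.filter fun z => z ≤ y).length := by
  constructor
  · exact fun h => rankLt h hy
  · intro h
    by_contra hxy
    push_neg at hxy
    rcases Nat.eq_or_lt_of_le hxy with h1 | h1
    · subst h1; omega
    · exact absurd (rankLt h1 hx) (by omega)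

theorem renumber_length (l : List ℕ) : (renumber l).length = l.length := by
  simp [renumber]

theorem renumber_isPermList {l : List ℕ} (hl : l.Nodup) : IsPermList (renumber l) := by
  unfold IsPermList
  rw [renumber_length]
  have hnd : (renumber l).Nodup := by
    apply List.Nodup.map_on _ hl
    intro x hx y hy h
    exact rankInj hx hy h
  have hsub : renumber l ⊆ List.range' 1 l.length := by
    intro m hm
    obtain ⟨x, hx, rfl⟩ := List.mem_map.mp hm
    rw [List.mem_range'_1]
    exact ⟨rankPos hx, by have := rankLe (l := l) x; omega⟩
  have hsp := (hnd.subperm hsub)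
  exact hsp.perm_of_length_le (by rw [List.length_range', renumber_length])

theorem renumber_ordIso {l : List ℕ} : OrdIso l (renumber l) := by
  refine ⟨(renumber_length l).symm, fun i j hi hj => ?_⟩
  have hj' : j < (renumber l).length := by rw [renumber_length]; exact hj
  have hi' : i < (renumber l).length := by rw [renumber_length]; exact hi
  rw [List.getD_eq_getElem _ _ hi, List.getD_eq_getElem _ _ hj,
    List.getD_eq_getElem _ _ hi', List.getD_eq_getElem _ _ hj']
  show _ ↔ (l.map _)[i]'(by simpa [renumber] using hi') < (l.map _)[j]'(by simpa [renumber] using hj')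
  rw [List.getElem_map, List.getElem_map]
  exact rankLt_iff (List.getElem_mem _) (List.getElem_mem _)

end Aux

namespace Aux

/-! ### ints lemmas -/

@[simp] theorem ints_nil : ints ([] : SPat) = [] := rfl
@[simp] theorem ints_cons_some (k : ℕ) (ρ : SPat) : ints (some k :: ρ) = k :: ints ρ := rfl
@[simp] theorem ints_cons_none (ρ : SPat) : ints (none :: ρ) = ints ρ := rfl
@[simp] theorem ints_append (ρ₁ ρ₂ : SPat) : ints (ρ₁ ++ ρ₂) = ints ρ₁ ++ ints ρ₂ := by
  simp [ints]
@[simp] theorem ints_map_some (l : List ℕ) : ints (l.map some) = l := by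
  induction l with
  | nil => rfl
  | cons a t ih => simpa [ints] using ih

/-! ### Repl basic lemmas -/

theorem repl_swap {a b ρ₁ ρ₂ : SPat} (h : Repl a b ρ₁ ρ₂) : Repl b a ρ₂ ρ₁ := by
  induction h with
  | nil => exact .nil
  | keep x _ ih => exact .keep x ih
  | repl x y _ ih => exact .repl y x ih

theorem repl_refl (s : SPat) : Repl [] [] s s := by
  induction s with
  | nil => exact .nil
  | cons x t ih => exact .keep x ih

theorem repl_prefix (p : SPat) {a b ρ₁ ρ₂ : SPat} (h : Repl a b ρ₁ ρ₂) :
    Repl a b (p ++ ρ₁) (p ++ ρ₂) := by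
  induction p with
  | nil => exact h
  | cons x t ih => exact .keep x ih

theorem repl_construct (p q r s : SPat) (xu xv xw yu yv yw : Option ℕ) :
    Repl [xu, xv, xw] [yu, yv, yw] (p ++ xu :: (q ++ xv :: (r ++ xw :: s)))
      (p ++ yu :: (q ++ yv :: (r ++ yw :: s))) :=
  repl_prefix p (.repl _ _ (repl_prefix q (.repl _ _ (repl_prefix r (.repl _ _ (repl_refl s))))))

theorem repl_ints_sublist {a b ρ₁ ρ₂ : SPat} (h : Repl a b ρ₁ ρ₂) :
    List.Sublist (ints a) (ints ρ₁) := by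
  induction h with
  | nil => exact List.Sublist.refl _
  | keep x _ ih =>
    cases x with
    | none => simpa using ih
    | some m => simpa using ih.cons m
  | repl x y _ ih =>
    cases x with
    | none => simpa using ih
    | some m => simpa using ih.cons₂ m

theorem repl_count {a b ρ₁ ρ₂ : SPat} (h : Repl a b ρ₁ ρ₂) (k : ℕ) :
    (ints ρ₁).count k + (ints b).count k = (ints ρ₂).count k + (ints a).count k := by
  induction h with
  | nil => rfl
  | keep x _ ih =>
    cases x with
    | none => simpa using ih
    | some m => simp [List.count_cons]; omega
  | repl x y _ ih =>
    cases x <;> cases y <;> simp [List.count_cons] <;> omega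

theorem repl_ints_nodup {a b ρ₁ ρ₂ : SPat} (h : Repl a b ρ₁ ρ₂)
    (h₁ : (ints ρ₁).Nodup) (hb : (ints b).Nodup)
    (hint : ∀ k ∈ ints b, k ∈ ints ρ₁ → k ∈ ints a) : (ints ρ₂).Nodup := by
  rw [List.nodup_iff_count_le_one] at h₁ hb ⊢
  intro k
  have hc := repl_count h k
  have ha : (ints a).count k ≤ (ints ρ₁).count k := (repl_ints_sublist h).count_le k
  have h1 := h₁ k
  have h2 := hb k
  by_cases hkb : k ∈ ints b
  · by_cases hk1 : k ∈ ints ρ₁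
    · have hka : k ∈ ints a := hint k hkb hk1
      have c1 : 1 ≤ (ints a).count k := List.count_pos_iff.mpr hka
      omega
    · have c0 : (ints ρ₁).count k = 0 := List.count_eq_zero.mpr hk1
      omega
  · have c0 : (ints b).count k = 0 := List.count_eq_zero.mpr hkb
    omega

theorem repl_mem_of_mem₂ {a b ρ₁ ρ₂ : SPat} (h : Repl a b ρ₁ ρ₂) {k : ℕ}
    (hk : k ∈ ints ρ₂) : k ∈ ints ρ₁ ∨ k ∈ ints b := by
  have hc := repl_count h k
  have h2 : 1 ≤ (ints ρ₂).count k := List.count_pos_iff.mpr hk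
  by_contra hcon
  push_neg at hcon
  have c1 : (ints ρ₁).count k = 0 := List.count_eq_zero.mpr hcon.1
  have c2 : (ints b).count k = 0 := List.count_eq_zero.mpr hcon.2
  omega

end Aux

namespace Aux

theorem repl_nil {a b ρ₁ ρ₂ : SPat} (h : Repl a b ρ₁ ρ₂) : a = [] → b = [] → ρ₂ = ρ₁ := by
  induction h with
  | nil => intro _ _; rfl
  | keep x h ih => intro h1 h2; rw [ih h1 h2]
  | repl x y h ih => intro h1 _; simp at h1

theorem dec1 {a b ρ₁ ρ₂ : SPat} (h : Repl a b ρ₁ ρ₂) :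
    ∀ w : ℕ, a = [some w] → b = [some w] →
    ρ₂ = ρ₁ ∧ ∃ k, k < (ints ρ₁).length ∧ (ints ρ₁).getD k 0 = w := by
  induction h with
  | nil => intro w hw _; simp at hw
  | keep x h ih =>
    intro w h1 h2
    obtain ⟨heq, k, hk, hval⟩ := ih w h1 h2
    subst heq
    refine ⟨rfl, ?_⟩
    cases x with
    | none => exact ⟨k, by simpa using hk, by simpa using hval⟩
    | some m => exact ⟨k + 1, by simp; omega, by simpa using hval⟩
  | repl x y h ih =>
    intro w h1 h2
    obtain ⟨hx, ha⟩ := List.cons_eq_cons.mp h1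
    obtain ⟨hy, hb⟩ := List.cons_eq_cons.mp h2
    subst hx; subst hy
    have heq := repl_nil h ha hb
    subst heq
    exact ⟨rfl, 0, by simp, by simp⟩

theorem dec1' {a b ρ₁ ρ₂ : SPat} (h : Repl a b ρ₁ ρ₂) :
    ∀ w : ℕ, a = [some w] → b = [none] →
    ∃ k, k < (ints ρ₁).length ∧ (ints ρ₁).getD k 0 = w ∧
      ints ρ₂ = (ints ρ₁).eraseIdx k := by
  induction h with
  | nil => intro w hw _; simp at hw
  | keep x h ih =>
    intro w h1 h2
    obtain ⟨k, hk, hval, herase⟩ := ih w h1 h2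
    cases x with
    | none => exact ⟨k, by simpa using hk, by simpa using hval, by simpa using herase⟩
    | some m =>
      exact ⟨k + 1, by simp; omega, by simpa using hval,
        by simp [List.eraseIdx_cons_succ, herase]⟩
  | repl x y h ih =>
    intro w h1 h2
    obtain ⟨hx, ha⟩ := List.cons_eq_cons.mp h1
    obtain ⟨hy, hb⟩ := List.cons_eq_cons.mp h2
    subst hx; subst hy
    have heq := repl_nil h ha hb
    subst heq
    exact ⟨0, by simp, by simp, by simp⟩

theorem dec2 {a b ρ₁ ρ₂ : SPat} (h : Repl a b ρ₁ ρ₂) :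
    ∀ v w : ℕ, a = [some v, some w] → b = [some v, some w] →
    ρ₂ = ρ₁ ∧ ∃ j k, j < k ∧ k < (ints ρ₁).length ∧
      (ints ρ₁).getD j 0 = v ∧ (ints ρ₁).getD k 0 = w := by
  induction h with
  | nil => intro v w hv _; simp at hv
  | keep x h ih =>
    intro v w h1 h2
    obtain ⟨heq, j, k, hjk, hk, hjv, hkw⟩ := ih v w h1 h2
    subst heq
    refine ⟨rfl, ?_⟩
    cases x with
    | none => exact ⟨j, k, hjk, by simpa using hk, by simpa using hjv, by simpa using hkw⟩
    | some m =>
      exact ⟨j + 1, k + 1, by omega, by simp; omega, by simpa using hjv, by simpa using hkw⟩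
  | repl x y h ih =>
    intro v w h1 h2
    obtain ⟨hx, ha⟩ := List.cons_eq_cons.mp h1
    obtain ⟨hy, hb⟩ := List.cons_eq_cons.mp h2
    subst hx; subst hy
    obtain ⟨heq, k, hk, hkw⟩ := dec1 h w ha hb
    subst heq
    exact ⟨rfl, 0, k + 1, by omega, by simp; omega, by simp, by simpa using hkw⟩

theorem dec2a {a b ρ₁ ρ₂ : SPat} (h : Repl a b ρ₁ ρ₂) :
    ∀ v w : ℕ, a = [some v, some w] → b = [some v, none] →
    ∃ j k, j < k ∧ k < (ints ρ₁).length ∧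
      (ints ρ₁).getD j 0 = v ∧ (ints ρ₁).getD k 0 = w ∧
      ints ρ₂ = (ints ρ₁).eraseIdx k := by
  induction h with
  | nil => intro v w hv _; simp at hv
  | keep x h ih =>
    intro v w h1 h2
    obtain ⟨j, k, hjk, hk, hjv, hkw, herase⟩ := ih v w h1 h2
    cases x with
    | none =>
      exact ⟨j, k, hjk, by simpa using hk, by simpa using hjv, by simpa using hkw,
        by simpa using herase⟩
    | some m =>
      exact ⟨j + 1, k + 1, by omega, by simp; omega, by simpa using hjv, by simpa using hkw,
        by simp [List.eraseIdx_cons_succ, herase]⟩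
  | repl x y h ih =>
    intro v w h1 h2
    obtain ⟨hx, ha⟩ := List.cons_eq_cons.mp h1
    obtain ⟨hy, hb⟩ := List.cons_eq_cons.mp h2
    subst hx; subst hy
    obtain ⟨k, hk, hkw, herase⟩ := dec1' h w ha hb
    exact ⟨0, k + 1, by omega, by simp; omega, by simp, by simpa using hkw,
      by simp [List.eraseIdx_cons_succ, herase]⟩

theorem dec2b {a b ρ₁ ρ₂ : SPat} (h : Repl a b ρ₁ ρ₂) :
    ∀ v w : ℕ, a = [some v, some w] → b = [none, some w] →
    ∃ j k, j < k ∧ k < (ints ρ₁).length ∧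
      (ints ρ₁).getD j 0 = v ∧ (ints ρ₁).getD k 0 = w ∧
      ints ρ₂ = (ints ρ₁).eraseIdx j := by
  induction h with
  | nil => intro v w hv _; simp at hv
  | keep x h ih =>
    intro v w h1 h2
    obtain ⟨j, k, hjk, hk, hjv, hkw, herase⟩ := ih v w h1 h2
    cases x with
    | none =>
      exact ⟨j, k, hjk, by simpa using hk, by simpa using hjv, by simpa using hkw,
        by simpa using herase⟩
    | some m =>
      exact ⟨j + 1, k + 1, by omega, by simp; omega, by simpa using hjv, by simpa using hkw,
        by simp [List.eraseIdx_cons_succ, herase]⟩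
  | repl x y h ih =>
    intro v w h1 h2
    obtain ⟨hx, ha⟩ := List.cons_eq_cons.mp h1
    obtain ⟨hy, hb⟩ := List.cons_eq_cons.mp h2
    subst hx; subst hy
    obtain ⟨heq, k, hk, hkw⟩ := dec1 h w ha hb
    subst heq
    exact ⟨0, k + 1, by omega, by simp; omega, by simp, by simpa using hkw, by simp⟩

theorem dec3c {a b ρ₁ ρ₂ : SPat} (h : Repl a b ρ₁ ρ₂) :
    ∀ u v w : ℕ, a = [some u, some v, some w] → b = [some u, some v, none] →
    ∃ i j k, i < j ∧ j < k ∧ k < (ints ρ₁).length ∧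
      (ints ρ₁).getD i 0 = u ∧ (ints ρ₁).getD j 0 = v ∧ (ints ρ₁).getD k 0 = w ∧
      ints ρ₂ = (ints ρ₁).eraseIdx k := by
  induction h with
  | nil => intro u v w hv _; simp at hv
  | keep x h ih =>
    intro u v w h1 h2
    obtain ⟨i, j, k, hij, hjk, hk, hiu, hjv, hkw, herase⟩ := ih u v w h1 h2
    cases x with
    | none =>
      exact ⟨i, j, k, hij, hjk, by simpa using hk, by simpa using hiu, by simpa using hjv,
        by simpa using hkw, by simpa using herase⟩
    | some m =>
      exact ⟨i + 1, j + 1, k + 1, by omega, by omega, by simp; omega, by simpa using hiu,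
        by simpa using hjv, by simpa using hkw, by simp [List.eraseIdx_cons_succ, herase]⟩
  | repl x y h ih =>
    intro u v w h1 h2
    obtain ⟨hx, ha⟩ := List.cons_eq_cons.mp h1
    obtain ⟨hy, hb⟩ := List.cons_eq_cons.mp h2
    subst hx; subst hy
    obtain ⟨j, k, hjk, hk, hjv, hkw, herase⟩ := dec2a h v w ha hb
    exact ⟨0, j + 1, k + 1, by omega, by omega, by simp; omega, by simp, by simpa using hjv,
      by simpa using hkw, by simp [List.eraseIdx_cons_succ, herase]⟩

theorem dec3b {a b ρ₁ ρ₂ : SPat} (h : Repl a b ρ₁ ρ₂) :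
    ∀ u v w : ℕ, a = [some u, some v, some w] → b = [some u, none, some w] →
    ∃ i j k, i < j ∧ j < k ∧ k < (ints ρ₁).length ∧
      (ints ρ₁).getD i 0 = u ∧ (ints ρ₁).getD j 0 = v ∧ (ints ρ₁).getD k 0 = w ∧
      ints ρ₂ = (ints ρ₁).eraseIdx j := by
  induction h with
  | nil => intro u v w hv _; simp at hv
  | keep x h ih =>
    intro u v w h1 h2
    obtain ⟨i, j, k, hij, hjk, hk, hiu, hjv, hkw, herase⟩ := ih u v w h1 h2
    cases x with
    | none =>
      exact ⟨i, j, k, hij, hjk, by simpa using hk, by simpa using hiu, by simpa using hjv,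
        by simpa using hkw, by simpa using herase⟩
    | some m =>
      exact ⟨i + 1, j + 1, k + 1, by omega, by omega, by simp; omega, by simpa using hiu,
        by simpa using hjv, by simpa using hkw, by simp [List.eraseIdx_cons_succ, herase]⟩
  | repl x y h ih =>
    intro u v w h1 h2
    obtain ⟨hx, ha⟩ := List.cons_eq_cons.mp h1
    obtain ⟨hy, hb⟩ := List.cons_eq_cons.mp h2
    subst hx; subst hy
    obtain ⟨j, k, hjk, hk, hjv, hkw, herase⟩ := dec2b h v w ha hb
    exact ⟨0, j + 1, k + 1, by omega, by omega, by simp; omega, by simp, by simpa using hjv,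
      by simpa using hkw, by simp [List.eraseIdx_cons_succ, herase]⟩

theorem dec3a {a b ρ₁ ρ₂ : SPat} (h : Repl a b ρ₁ ρ₂) :
    ∀ u v w : ℕ, a = [some u, some v, some w] → b = [none, some v, some w] →
    ∃ i j k, i < j ∧ j < k ∧ k < (ints ρ₁).length ∧
      (ints ρ₁).getD i 0 = u ∧ (ints ρ₁).getD j 0 = v ∧ (ints ρ₁).getD k 0 = w ∧
      ints ρ₂ = (ints ρ₁).eraseIdx i := by
  induction h with
  | nil => intro u v w hv _; simp at hv
  | keep x h ih =>
    intro u v w h1 h2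
    obtain ⟨i, j, k, hij, hjk, hk, hiu, hjv, hkw, herase⟩ := ih u v w h1 h2
    cases x with
    | none =>
      exact ⟨i, j, k, hij, hjk, by simpa using hk, by simpa using hiu, by simpa using hjv,
        by simpa using hkw, by simpa using herase⟩
    | some m =>
      exact ⟨i + 1, j + 1, k + 1, by omega, by omega, by simp; omega, by simpa using hiu,
        by simpa using hjv, by simpa using hkw, by simp [List.eraseIdx_cons_succ, herase]⟩
  | repl x y h ih =>
    intro u v w h1 h2
    obtain ⟨hx, ha⟩ := List.cons_eq_cons.mp h1
    obtain ⟨hy, hb⟩ := List.cons_eq_cons.mp h2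
    subst hx; subst hy
    obtain ⟨heq, j, k, hjk, hk, hjv, hkw⟩ := dec2 h v w ha hb
    subst heq
    exact ⟨0, j + 1, k + 1, by omega, by omega, by simp; omega, by simp, by simpa using hjv,
      by simpa using hkw, by simp⟩

end Aux

namespace Aux

theorem eraseIdx_idx_lt {l : List ℕ} {m i : ℕ} (h : i < (l.eraseIdx m).length) :
    (if i < m then i else i + 1) < l.length := by
  rw [List.length_eraseIdx] at h
  split <;> split at h <;> omega

theorem getD_eraseIdx (l : List ℕ) (m i : ℕ) (h : i < (l.eraseIdx m).length) :
    (l.eraseIdx m).getD i 0 = l.getD (if i < m then i else i + 1) 0 := by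
  have hb := eraseIdx_idx_lt h
  rw [List.getD_eq_getElem _ _ h, List.getD_eq_getElem _ _ hb, List.getElem_eraseIdx]
  split
  · rename_i h'
    simp only [if_pos h']
  · rename_i h'
    simp only [if_neg h']

theorem ordIso_eraseIdx {u v : List ℕ} (h : OrdIso u v) (m : ℕ) :
    OrdIso (u.eraseIdx m) (v.eraseIdx m) := by
  obtain ⟨hl, hiff⟩ := h
  have hlen : (u.eraseIdx m).length = (v.eraseIdx m).length := by
    rw [List.length_eraseIdx, List.length_eraseIdx, hl]
  refine ⟨hlen, fun i j hi hj => ?_⟩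
  have hi2 : i < (v.eraseIdx m).length := hlen ▸ hi
  have hj2 : j < (v.eraseIdx m).length := hlen ▸ hj
  rw [getD_eraseIdx _ _ _ hi, getD_eraseIdx _ _ _ hj,
    getD_eraseIdx _ _ _ hi2, getD_eraseIdx _ _ _ hj2]
  exact hiff _ _ (eraseIdx_idx_lt hi) (eraseIdx_idx_lt hj)

/-- position selected for deletion -/
def pick (d i j k : ℕ) : ℕ := if d = 0 then i else if d = 1 then j else k

/-- The "one-step deletion" relation on permutations: delete, from some copy of
`123`, the entry at position selected by `d` (0 = smallest, 1 = middle, 2 = largest). -/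
def Del (d : ℕ) (π σ : List ℕ) : Prop :=
  IsPermList π ∧ IsPermList σ ∧
  ∃ i j k : ℕ, i < j ∧ j < k ∧ k < π.length ∧
    π.getD i 0 < π.getD j 0 ∧ π.getD j 0 < π.getD k 0 ∧
    OrdIso (π.eraseIdx (pick d i j k)) σ

theorem ordIso_pair {u v u' v' : ℕ} (h1 : u < v ↔ u' < v')
    (h2 : v < u ↔ v' < u') : OrdIso [u, v] [u', v'] := by
  refine ⟨rfl, fun i j hi hj => ?_⟩
  simp at hi hj
  interval_cases i <;> interval_cases j <;> simp [h1, h2]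

theorem ordIso_triple {u v w u' v' w' : ℕ}
    (h1 : u < v ↔ u' < v') (h2 : v < u ↔ v' < u')
    (h3 : u < w ↔ u' < w') (h4 : w < u ↔ w' < u')
    (h5 : v < w ↔ v' < w') (h6 : w < v ↔ w' < v') : OrdIso [u, v, w] [u', v', w'] := by
  refine ⟨rfl, fun i j hi hj => ?_⟩
  simp at hi hj
  interval_cases i <;> interval_cases j <;> simp [h1, h2, h3, h4, h5, h6]

theorem isCopy123 {u v w : ℕ} (h1 : u < v) (h2 : v < w) :
    IsCopy [some u, some v, some w] pat123 := by
  refine ⟨rfl, ?_, ?_⟩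
  · intro i
    rcases i with _ | _ | _ | i <;> simp [pat123]
  · show OrdIso [u, v, w] [1, 2, 3]
    exact ordIso_triple (by omega) (by omega) (by omega) (by omega) (by omega) (by omega)

theorem isCopy12S {u v : ℕ} (h1 : u < v) : IsCopy [some u, some v, none] pat12S := by
  refine ⟨rfl, ?_, ?_⟩
  · intro i
    rcases i with _ | _ | _ | i <;> simp [pat12S]
  · show OrdIso [u, v] [1, 2]
    exact ordIso_pair (by omega) (by omega)

theorem isCopy1S3 {u w : ℕ} (h1 : u < w) : IsCopy [some u, none, some w] pat1S3 := by
  refine ⟨rfl, ?_, ?_⟩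
  · intro i
    rcases i with _ | _ | _ | i <;> simp [pat1S3]
  · show OrdIso [u, w] [1, 3]
    exact ordIso_pair (by omega) (by omega)

theorem isCopyS23 {v w : ℕ} (h1 : v < w) : IsCopy [none, some v, some w] patS23 := by
  refine ⟨rfl, ?_, ?_⟩
  · intro i
    rcases i with _ | _ | _ | i <;> simp [patS23]
  · show OrdIso [v, w] [2, 3]
    exact ordIso_pair (by omega) (by omega)

theorem ordIso_getD_lt {u v : List ℕ} (h : OrdIso u v) {i j : ℕ}
    (hi : i < u.length) (hj : j < u.length) :
    (u.getD i 0 < u.getD j 0 ↔ v.getD i 0 < v.getD j 0) := h.2 i j hi hj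

end Aux

namespace Aux

theorem isCopy123_shape {a : SPat} (h : IsCopy a pat123) :
    ∃ u v w, u < v ∧ v < w ∧ a = [some u, some v, some w] := by
  obtain ⟨hlen, hstar, hoi⟩ := h
  obtain ⟨x, y, z, rfl⟩ := List.length_eq_three.mp (by simpa [pat123] using hlen)
  have h0 := hstar 0
  have h1 := hstar 1
  have h2 := hstar 2
  simp [pat123] at h0 h1 h2
  obtain ⟨u, rfl⟩ := Option.ne_none_iff_exists'.mp h0
  obtain ⟨v, rfl⟩ := Option.ne_none_iff_exists'.mp h1
  obtain ⟨w, rfl⟩ := Option.ne_none_iff_exists'.mp h2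
  refine ⟨u, v, w, ?_, ?_, rfl⟩
  · have := hoi.2 0 1 (by simp [ints]) (by simp [ints])
    simpa [ints, pat123] using this
  · have := hoi.2 1 2 (by simp [ints]) (by simp [ints])
    simpa [ints, pat123] using this

theorem isResult_del_12S {π σ : List ℕ} (hπ : IsPermList π)
    (h : IsResult pat123 pat12S π σ) : Del 2 π σ := by
  obtain ⟨ρ₁, ρ₂, a, b, hss, hoi, hca, hsb, hcb, hint, hagree, hrepl, hperm, hoi2⟩ := h
  obtain ⟨u, v, w, huv, hvw, rfl⟩ := isCopy123_shape hca
  obtain ⟨b0, b1, b2, rfl⟩ := List.length_eq_three.mp (by simpa [pat12S] using hcb.1)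
  have hb0 : b0 = some u := by
    have := hagree 0 0 1 rfl rfl
    simpa using this.symm
  have hb1 : b1 = some v := by
    have := hagree 1 1 2 rfl rfl
    simpa using this.symm
  have hb2 : b2 = none := by
    have := (hcb.2.1 2).mpr rfl
    simpa using this
  subst hb0; subst hb1; subst hb2
  obtain ⟨i, j, k, hij, hjk, hk, hiu, hjv, hkw, herase⟩ := dec3c hrepl u v w rfl rfl
  have hlen : π.length = (ints ρ₁).length := hoi.1
  refine ⟨hπ, hperm, i, j, k, hij, hjk, by omega, ?_, ?_, ?_⟩
  · rw [ordIso_getD_lt hoi (by omega) (by omega), hiu, hjv]; exact huv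
  · rw [ordIso_getD_lt hoi (by omega) (by omega), hjv, hkw]; exact hvw
  · have hp : pick 2 i j k = k := by simp [pick]
    rw [hp]
    have h1 : OrdIso (π.eraseIdx k) ((ints ρ₁).eraseIdx k) := ordIso_eraseIdx hoi k
    rw [← herase] at h1
    exact ordIso_trans h1 hoi2

theorem isResult_del_1S3 {π σ : List ℕ} (hπ : IsPermList π)
    (h : IsResult pat123 pat1S3 π σ) : Del 1 π σ := by
  obtain ⟨ρ₁, ρ₂, a, b, hss, hoi, hca, hsb, hcb, hint, hagree, hrepl, hperm, hoi2⟩ := h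
  obtain ⟨u, v, w, huv, hvw, rfl⟩ := isCopy123_shape hca
  obtain ⟨b0, b1, b2, rfl⟩ := List.length_eq_three.mp (by simpa [pat1S3] using hcb.1)
  have hb0 : b0 = some u := by
    have := hagree 0 0 1 rfl rfl
    simpa using this.symm
  have hb2 : b2 = some w := by
    have := hagree 2 2 3 rfl rfl
    simpa using this.symm
  have hb1 : b1 = none := by
    have := (hcb.2.1 1).mpr rfl
    simpa using this
  subst hb0; subst hb1; subst hb2
  obtain ⟨i, j, k, hij, hjk, hk, hiu, hjv, hkw, herase⟩ := dec3b hrepl u v w rfl rfl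
  have hlen : π.length = (ints ρ₁).length := hoi.1
  refine ⟨hπ, hperm, i, j, k, hij, hjk, by omega, ?_, ?_, ?_⟩
  · rw [ordIso_getD_lt hoi (by omega) (by omega), hiu, hjv]; exact huv
  · rw [ordIso_getD_lt hoi (by omega) (by omega), hjv, hkw]; exact hvw
  · have hp : pick 1 i j k = j := by simp [pick]
    rw [hp]
    have h1 : OrdIso (π.eraseIdx j) ((ints ρ₁).eraseIdx j) := ordIso_eraseIdx hoi j
    rw [← herase] at h1
    exact ordIso_trans h1 hoi2

theorem isResult_del_S23 {π σ : List ℕ} (hπ : IsPermList π)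
    (h : IsResult pat123 patS23 π σ) : Del 0 π σ := by
  obtain ⟨ρ₁, ρ₂, a, b, hss, hoi, hca, hsb, hcb, hint, hagree, hrepl, hperm, hoi2⟩ := h
  obtain ⟨u, v, w, huv, hvw, rfl⟩ := isCopy123_shape hca
  obtain ⟨b0, b1, b2, rfl⟩ := List.length_eq_three.mp (by simpa [patS23] using hcb.1)
  have hb1 : b1 = some v := by
    have := hagree 1 1 2 rfl rfl
    simpa using this.symm
  have hb2 : b2 = some w := by
    have := hagree 2 2 3 rfl rfl
    simpa using this.symm
  have hb0 : b0 = none := by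
    have := (hcb.2.1 0).mpr rfl
    simpa using this
  subst hb0; subst hb1; subst hb2
  obtain ⟨i, j, k, hij, hjk, hk, hiu, hjv, hkw, herase⟩ := dec3a hrepl u v w rfl rfl
  have hlen : π.length = (ints ρ₁).length := hoi.1
  refine ⟨hπ, hperm, i, j, k, hij, hjk, by omega, ?_, ?_, ?_⟩
  · rw [ordIso_getD_lt hoi (by omega) (by omega), hiu, hjv]; exact huv
  · rw [ordIso_getD_lt hoi (by omega) (by omega), hjv, hkw]; exact hvw
  · have hp : pick 0 i j k = i := by simp [pick]
    rw [hp]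
    have h1 : OrdIso (π.eraseIdx i) ((ints ρ₁).eraseIdx i) := ordIso_eraseIdx hoi i
    rw [← herase] at h1
    exact ordIso_trans h1 hoi2

end Aux

namespace Aux

theorem eraseIdx_concat {m : ℕ} {p t : List ℕ} {u : ℕ} (h : p.length = m) :
    (p ++ u :: t).eraseIdx m = p ++ t := by
  subst h
  rw [List.eraseIdx_append_of_length_le (le_refl _)]
  simp

theorem three_split {l : List ℕ} {i j k : ℕ} (hij : i < j) (hjk : j < k) (hk : k < l.length) :
    ∃ p q r s : List ℕ,
      l = p ++ l.getD i 0 :: (q ++ l.getD j 0 :: (r ++ l.getD k 0 :: s)) ∧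
      p.length = i ∧ q.length = j - i - 1 ∧ r.length = k - j - 1 := by
  have hi : i < l.length := by omega
  have hj : j < l.length := by omega
  have e1 : l = l.take i ++ l.getD i 0 :: l.drop (i + 1) := by
    conv_lhs => rw [← List.take_append_drop i l]
    rw [List.drop_eq_getElem_cons hi, List.getD_eq_getElem _ _ hi]
  have e2 : l.drop (i + 1) =
      (l.drop (i + 1)).take (j - (i + 1)) ++ l.getD j 0 :: l.drop (j + 1) := by
    conv_lhs => rw [← List.take_append_drop (j - (i + 1)) (l.drop (i + 1))]
    congr 1
    rw [List.drop_drop]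
    have harr : i + 1 + (j - (i + 1)) = j := by omega
    rw [harr, List.drop_eq_getElem_cons hj, List.getD_eq_getElem _ _ hj]
  have e3 : l.drop (j + 1) =
      (l.drop (j + 1)).take (k - (j + 1)) ++ l.getD k 0 :: l.drop (k + 1) := by
    conv_lhs => rw [← List.take_append_drop (k - (j + 1)) (l.drop (j + 1))]
    congr 1
    rw [List.drop_drop]
    have harr : j + 1 + (k - (j + 1)) = k := by omega
    rw [harr, List.drop_eq_getElem_cons hk, List.getD_eq_getElem _ _ hk]
  refine ⟨l.take i, (l.drop (i + 1)).take (j - (i + 1)), (l.drop (j + 1)).take (k - (j + 1)),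
    l.drop (k + 1), ?_, ?_, ?_, ?_⟩
  · conv_lhs => rw [e1, e2, e3]
  · rw [List.length_take]; omega
  · rw [List.length_take, List.length_drop]; omega
  · rw [List.length_take, List.length_drop]; omega

theorem permList_getD_mem {π : List ℕ} {i : ℕ} (hi : i < π.length) : π.getD i 0 ∈ π := by
  rw [List.getD_eq_getElem _ _ hi]; exact List.getElem_mem _

theorem del_isResult_12S {π σ : List ℕ} (h : Del 2 π σ) : IsResult pat123 pat12S π σ := by
  obtain ⟨hπ, hσ, i, j, k, hij, hjk, hk, h1, h2, hoi⟩ := h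
  have hpick : pick 2 i j k = k := by simp [pick]
  rw [hpick] at hoi
  obtain ⟨p, q, r, s, hsplit, hp, hq, hr⟩ := three_split hij hjk hk
  have hupos := (permList_mem hπ (permList_getD_mem (show i < π.length by omega))).1
  have hvpos := (permList_mem hπ (permList_getD_mem (show j < π.length by omega))).1
  have hwpos := (permList_mem hπ (permList_getD_mem (show k < π.length by omega))).1
  generalize hgu : π.getD i 0 = u at h1 hsplit hupos
  generalize hgv : π.getD j 0 = v at h1 h2 hsplit hvpos
  generalize hgw : π.getD k 0 = w at h2 hsplit hwpos
  refine ⟨(p.map some) ++ some u :: ((q.map some) ++ some v :: ((r.map some) ++ some w :: (s.map some))),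
    (p.map some) ++ some u :: ((q.map some) ++ some v :: ((r.map some) ++ none :: (s.map some))),
    [some u, some v, some w], [some u, some v, none], ?_, ?_, ?_, ?_, ?_, ?_, ?_, ?_, hσ, ?_⟩
  case _ =>
    -- StarStr ρ₁
    constructor
    · simp only [ints_append, ints_cons_some, ints_map_some]
      rw [← hsplit]
      exact permList_nodup hπ
    · intro m hm
      simp only [ints_append, ints_cons_some, ints_map_some] at hm
      rw [← hsplit] at hm
      exact (permList_mem hπ hm).1
  case _ =>
    simp only [ints_append, ints_cons_some, ints_map_some]
    rw [← hsplit]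
    exact ordIso_refl π
  case _ => exact isCopy123 h1 h2
  case _ =>
    constructor
    · show List.Nodup [u, v]
      simp; omega
    · intro m hm
      simp only [ints_cons_some, ints_cons_none, ints_nil] at hm
      rcases List.mem_pair.mp hm with rfl | rfl
      · omega
      · omega
  case _ => exact isCopy12S h1
  case _ =>
    intro m hm _
    simp only [ints_cons_some, ints_cons_none, ints_nil] at hm ⊢
    rcases List.mem_pair.mp hm with rfl | rfl <;> simp
  case _ =>
    intro i' j' x hx1 hx2
    have hi3 : i' < 3 := by
      by_contra hc
      push_neg at hc
      rw [List.getD_eq_default _ _ (by simpa [pat123] using hc)] at hx1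
      simp at hx1
    have hj3 : j' < 3 := by
      by_contra hc
      push_neg at hc
      rw [List.getD_eq_default _ _ (by simpa [pat12S] using hc)] at hx2
      simp at hx2
    interval_cases i' <;> interval_cases j' <;>
      simp [pat123, pat12S] at hx1 hx2 ⊢ <;> omega
  case _ => exact repl_construct _ _ _ _ _ _ _ _ _ _
  case _ =>
    have he : π.eraseIdx k = p ++ u :: (q ++ v :: (r ++ s)) := by
      conv_lhs => rw [hsplit]
      have hshape : p ++ u :: (q ++ v :: (r ++ w :: s)) = (p ++ u :: (q ++ v :: r)) ++ w :: s := by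
        simp
      rw [hshape, eraseIdx_concat (by simp; omega)]
      simp
    have hints : ints ((p.map some) ++ some u :: ((q.map some) ++ some v :: ((r.map some) ++ none :: (s.map some)))) = p ++ u :: (q ++ v :: (r ++ s)) := by
      simp only [ints_append, ints_cons_some, ints_cons_none, ints_map_some]
    rw [hints, ← he]
    exact hoi

end Aux

namespace Aux

theorem del_isResult_1S3 {π σ : List ℕ} (h : Del 1 π σ) : IsResult pat123 pat1S3 π σ := by
  obtain ⟨hπ, hσ, i, j, k, hij, hjk, hk, h1, h2, hoi⟩ := h
  have hpick : pick 1 i j k = j := by simp [pick]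
  rw [hpick] at hoi
  obtain ⟨p, q, r, s, hsplit, hp, hq, hr⟩ := three_split hij hjk hk
  have hupos := (permList_mem hπ (permList_getD_mem (show i < π.length by omega))).1
  have hwpos := (permList_mem hπ (permList_getD_mem (show k < π.length by omega))).1
  generalize hgu : π.getD i 0 = u at h1 hsplit hupos
  generalize hgv : π.getD j 0 = v at h1 h2 hsplit
  generalize hgw : π.getD k 0 = w at h2 hsplit hwpos
  refine ⟨(p.map some) ++ some u :: ((q.map some) ++ some v :: ((r.map some) ++ some w :: (s.map some))),
    (p.map some) ++ some u :: ((q.map some) ++ none :: ((r.map some) ++ some w :: (s.map some))),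
    [some u, some v, some w], [some u, none, some w], ?_, ?_, ?_, ?_, ?_, ?_, ?_, ?_, hσ, ?_⟩
  case _ =>
    constructor
    · simp only [ints_append, ints_cons_some, ints_map_some]
      rw [← hsplit]
      exact permList_nodup hπ
    · intro m hm
      simp only [ints_append, ints_cons_some, ints_map_some] at hm
      rw [← hsplit] at hm
      exact (permList_mem hπ hm).1
  case _ =>
    simp only [ints_append, ints_cons_some, ints_map_some]
    rw [← hsplit]
    exact ordIso_refl π
  case _ => exact isCopy123 h1 h2
  case _ =>
    constructor
    · show List.Nodup [u, w]
      simp; omega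
    · intro m hm
      simp only [ints_cons_some, ints_cons_none, ints_nil] at hm
      rcases List.mem_pair.mp hm with rfl | rfl
      · omega
      · omega
  case _ => exact isCopy1S3 (by omega)
  case _ =>
    intro m hm _
    simp only [ints_cons_some, ints_cons_none, ints_nil] at hm ⊢
    rcases List.mem_pair.mp hm with rfl | rfl <;> simp
  case _ =>
    intro i' j' x hx1 hx2
    have hi3 : i' < 3 := by
      by_contra hc
      push_neg at hc
      rw [List.getD_eq_default _ _ (by simpa [pat123] using hc)] at hx1
      simp at hx1
    have hj3 : j' < 3 := by
      by_contra hc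
      push_neg at hc
      rw [List.getD_eq_default _ _ (by simpa [pat1S3] using hc)] at hx2
      simp at hx2
    interval_cases i' <;> interval_cases j' <;>
      simp [pat123, pat1S3] at hx1 hx2 ⊢ <;> omega
  case _ => exact repl_construct _ _ _ _ _ _ _ _ _ _
  case _ =>
    have he : π.eraseIdx j = p ++ u :: (q ++ (r ++ w :: s)) := by
      conv_lhs => rw [hsplit]
      have hshape : p ++ u :: (q ++ v :: (r ++ w :: s)) = (p ++ u :: q) ++ v :: (r ++ w :: s) := by
        simp
      rw [hshape, eraseIdx_concat (by simp; omega)]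
      simp
    have hints : ints ((p.map some) ++ some u :: ((q.map some) ++ none :: ((r.map some) ++ some w :: (s.map some)))) = p ++ u :: (q ++ (r ++ w :: s)) := by
      simp only [ints_append, ints_cons_some, ints_cons_none, ints_map_some]
    rw [hints, ← he]
    exact hoi

theorem del_isResult_S23 {π σ : List ℕ} (h : Del 0 π σ) : IsResult pat123 patS23 π σ := by
  obtain ⟨hπ, hσ, i, j, k, hij, hjk, hk, h1, h2, hoi⟩ := h
  have hpick : pick 0 i j k = i := by simp [pick]
  rw [hpick] at hoi
  obtain ⟨p, q, r, s, hsplit, hp, hq, hr⟩ := three_split hij hjk hk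
  have hvpos := (permList_mem hπ (permList_getD_mem (show j < π.length by omega))).1
  have hwpos := (permList_mem hπ (permList_getD_mem (show k < π.length by omega))).1
  generalize hgu : π.getD i 0 = u at h1 hsplit
  generalize hgv : π.getD j 0 = v at h1 h2 hsplit hvpos
  generalize hgw : π.getD k 0 = w at h2 hsplit hwpos
  refine ⟨(p.map some) ++ some u :: ((q.map some) ++ some v :: ((r.map some) ++ some w :: (s.map some))),
    (p.map some) ++ none :: ((q.map some) ++ some v :: ((r.map some) ++ some w :: (s.map some))),
    [some u, some v, some w], [none, some v, some w], ?_, ?_, ?_, ?_, ?_, ?_, ?_, ?_, hσ, ?_⟩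
  case _ =>
    constructor
    · simp only [ints_append, ints_cons_some, ints_map_some]
      rw [← hsplit]
      exact permList_nodup hπ
    · intro m hm
      simp only [ints_append, ints_cons_some, ints_map_some] at hm
      rw [← hsplit] at hm
      exact (permList_mem hπ hm).1
  case _ =>
    simp only [ints_append, ints_cons_some, ints_map_some]
    rw [← hsplit]
    exact ordIso_refl π
  case _ => exact isCopy123 h1 h2
  case _ =>
    constructor
    · show List.Nodup [v, w]
      simp; omega
    · intro m hm
      simp only [ints_cons_some, ints_cons_none, ints_nil] at hm
      rcases List.mem_pair.mp hm with rfl | rfl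
      · omega
      · omega
  case _ => exact isCopyS23 (by omega)
  case _ =>
    intro m hm _
    simp only [ints_cons_some, ints_cons_none, ints_nil] at hm ⊢
    rcases List.mem_pair.mp hm with rfl | rfl <;> simp
  case _ =>
    intro i' j' x hx1 hx2
    have hi3 : i' < 3 := by
      by_contra hc
      push_neg at hc
      rw [List.getD_eq_default _ _ (by simpa [pat123] using hc)] at hx1
      simp at hx1
    have hj3 : j' < 3 := by
      by_contra hc
      push_neg at hc
      rw [List.getD_eq_default _ _ (by simpa [patS23] using hc)] at hx2
      simp at hx2
    interval_cases i' <;> interval_cases j' <;>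
      simp [pat123, patS23] at hx1 hx2 ⊢ <;> omega
  case _ => exact repl_construct _ _ _ _ _ _ _ _ _ _
  case _ =>
    have he : π.eraseIdx i = p ++ (q ++ v :: (r ++ w :: s)) := by
      conv_lhs => rw [hsplit]
      rw [eraseIdx_concat hp]
    have hints : ints ((p.map some) ++ none :: ((q.map some) ++ some v :: ((r.map some) ++ some w :: (s.map some)))) = p ++ (q ++ v :: (r ++ w :: s)) := by
      simp only [ints_append, ints_cons_some, ints_cons_none, ints_map_some]
    rw [hints, ← he]
    exact hoi

end Aux

namespace Aux

theorem isResult_symm {α β : SPat} {π σ : List ℕ} (hπ : IsPermList π)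
    (h : IsResult α β π σ) : IsResult β α σ π := by
  obtain ⟨ρ₁, ρ₂, a, b, ⟨hnd1, hpos1⟩, hoi, hca, ⟨hndb, hposb⟩, hcb, hint, hagree,
    hrepl, hperm, hoi2⟩ := h
  have hsub := repl_ints_sublist hrepl
  refine ⟨ρ₂, ρ₁, b, a, ⟨?_, ?_⟩, ordIso_symm hoi2, hcb, ⟨?_, ?_⟩, hca, ?_, ?_,
    repl_swap hrepl, hπ, ordIso_symm hoi⟩
  · exact repl_ints_nodup hrepl hnd1 hndb hint
  · intro m hm
    rcases repl_mem_of_mem₂ hrepl hm with h' | h'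
    · exact hpos1 m h'
    · exact hposb m h'
  · exact hnd1.sublist hsub
  · intro m hm
    exact hpos1 m (hsub.subset hm)
  · intro m hma hm2
    have hc := repl_count hrepl m
    have h1 : (ints ρ₁).count m = 1 :=
      List.count_eq_one_of_mem hnd1 (hsub.subset hma)
    have ha1 : (ints a).count m = 1 :=
      List.count_eq_one_of_mem (hnd1.sublist hsub) hma
    have h2 : 1 ≤ (ints ρ₂).count m := List.count_pos_iff.mpr hm2
    have hb1 : 1 ≤ (ints b).count m := by omega
    exact List.count_pos_iff.mp hb1
  · intro i j x h1 h2
    exact (hagree j i x h2 h1).symm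

theorem isResult_perm₂ {α β : SPat} {π σ : List ℕ} (h : IsResult α β π σ) : IsPermList σ := by
  obtain ⟨_, _, _, _, _, _, _, _, _, _, _, _, hperm, _⟩ := h
  exact hperm

end Aux

namespace Aux

def adj (e m : ℕ) : ℕ := if m < e then m else m - 1

theorem adj_mono {e p q : ℕ} (h : p < q) (hp : p ≠ e) (hq : q ≠ e) : adj e p < adj e q := by
  unfold adj; split <;> split <;> omega

theorem adj_ne {e e' m : ℕ} (hm : m ≠ e) (hm' : m ≠ e') (he' : e' ≠ e) : adj e m ≠ adj e e' := by
  unfold adj; split <;> split <;> omega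

theorem adj_lt_length {l : List ℕ} {e m : ℕ} (hm : m < l.length) (hme : m ≠ e)
    (he : e < l.length) : adj e m < (l.eraseIdx e).length := by
  unfold adj
  rw [List.length_eraseIdx, if_pos he]
  split <;> omega

theorem pick_cases (d i j k : ℕ) : pick d i j k = i ∨ pick d i j k = j ∨ pick d i j k = k := by
  unfold pick; split_ifs <;> tauto

theorem pick_adj (d e i j k : ℕ) :
    pick d (adj e i) (adj e j) (adj e k) = adj e (pick d i j k) := by
  unfold pick; split_ifs <;> rfl

theorem pick_zero (i j k : ℕ) : pick 0 i j k = i := rfl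

theorem pick_one (i j k : ℕ) : pick 1 i j k = j := rfl

theorem pick_other {d : ℕ} (hd0 : d ≠ 0) (hd1 : d ≠ 1) (i j k : ℕ) : pick d i j k = k := by
  simp [pick, hd0, hd1]

theorem eraseIdx_eraseIdx : ∀ (l : List ℕ) (e e' : ℕ), e' < e →
    (l.eraseIdx e).eraseIdx e' = (l.eraseIdx e').eraseIdx (e - 1) := by
  intro l
  induction l with
  | nil => intros; simp [List.eraseIdx]
  | cons x t ih =>
    intro e e' h
    cases e' with
    | zero =>
      cases e with
      | zero => omega
      | succ e => simp [List.eraseIdx_cons_succ, List.eraseIdx_cons_zero]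
    | succ m =>
      cases e with
      | zero => omega
      | succ e =>
        cases e with
        | zero => omega
        | succ e2 =>
          simp only [List.eraseIdx_cons_succ, Nat.add_sub_cancel]
          rw [ih (e2 + 1) m (by omega)]
          simp

theorem getD_eraseIdx_ne {l : List ℕ} {e m : ℕ} (hm : m < l.length) (hne : m ≠ e)
    (he : e < l.length) : (l.eraseIdx e).getD (adj e m) 0 = l.getD m 0 := by
  rcases Nat.lt_or_ge m e with hlt | hge
  · unfold adj
    rw [if_pos hlt]
    have hb : m < (l.eraseIdx e).length := by
      rw [List.length_eraseIdx, if_pos he]; omega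
    rw [getD_eraseIdx _ _ _ hb, if_pos hlt]
  · have hgt : e < m := by omega
    unfold adj
    rw [if_neg (by omega)]
    have hb : m - 1 < (l.eraseIdx e).length := by
      rw [List.length_eraseIdx, if_pos he]; omega
    rw [getD_eraseIdx _ _ _ hb, if_neg (by omega)]
    congr 1
    omega

theorem find_triple {d : ℕ} {π : List ℕ} {i j k i' j' k' : ℕ}
    (hij : i < j) (hjk : j < k) (hk : k < π.length)
    (h1 : π.getD i 0 < π.getD j 0) (h2 : π.getD j 0 < π.getD k 0)
    (hij' : i' < j') (hjk' : j' < k') (hk' : k' < π.length)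
    (h1' : π.getD i' 0 < π.getD j' 0) (h2' : π.getD j' 0 < π.getD k' 0)
    (hne : pick d i j k ≠ pick d i' j' k') :
    ∃ p q r, p < q ∧ q < r ∧ r < π.length ∧
      π.getD p 0 < π.getD q 0 ∧ π.getD q 0 < π.getD r 0 ∧
      pick d p q r = pick d i' j' k' ∧
      p ≠ pick d i j k ∧ q ≠ pick d i j k ∧ r ≠ pick d i j k := by
  by_cases hd0 : d = 0
  · subst hd0
    simp only [pick_zero] at hne ⊢
    by_cases hji : j' = i
    · subst hji
      exact ⟨i', j, k, by omega, by omega, hk, by omega, by omega, rfl, by omega, by omega, by omega⟩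
    · by_cases hki : k' = i
      · subst hki
        exact ⟨i', j', j, by omega, by omega, by omega, by omega, by omega, rfl, by omega, by omega,
          by omega⟩
      · exact ⟨i', j', k', hij', hjk', hk', h1', h2', rfl, by omega, by omega, by omega⟩
  · by_cases hd1 : d = 1
    · subst hd1
      simp only [pick_one] at hne ⊢
      by_cases hii : i' = j
      · subst hii
        exact ⟨i, j', k', by omega, by omega, hk', by omega, by omega, rfl, by omega, by omega,
          by omega⟩
      · by_cases hki : k' = j
        · subst hki
          exact ⟨i', j', k, by omega, by omega, hk, by omega, by omega, rfl, by omega, by omega,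
            by omega⟩
        · exact ⟨i', j', k', hij', hjk', hk', h1', h2', rfl, by omega, by omega, by omega⟩
    · have hpk : ∀ a b c : ℕ, pick d a b c = c := pick_other hd0 hd1
      simp only [hpk] at hne ⊢
      by_cases hii : i' = k
      · subst hii
        exact ⟨i, j', k', by omega, by omega, hk', by omega, by omega, rfl, by omega,
          by omega, by omega⟩
      · by_cases hji : j' = k
        · subst hji
          exact ⟨i, j, k', by omega, by omega, hk', by omega, by omega, rfl, by omega,
            by omega, by omega⟩
        · exact ⟨i', j', k', hij', hjk', hk', h1', h2', rfl, by omega, by omega, by omega⟩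

end Aux

namespace Aux

theorem pick_lt_length {d i j k n : ℕ} (hij : i < j) (hjk : j < k) (hk : k < n) :
    pick d i j k < n := by
  rcases pick_cases d i j k with h | h | h <;> omega

theorem del_length {d : ℕ} {π σ : List ℕ} (h : Del d π σ) : σ.length + 1 = π.length := by
  obtain ⟨hπ, hσ, i, j, k, hij, hjk, hk, _, _, hoi⟩ := h
  have he := pick_lt_length (d := d) hij hjk hk
  have hl := hoi.1
  rw [List.length_eraseIdx, if_pos he] at hl
  omega

theorem del_contains {d : ℕ} {π σ : List ℕ} (h : Del d π σ) : contains123 π := by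
  obtain ⟨_, _, i, j, k, hij, hjk, hk, h1, h2, _⟩ := h
  exact ⟨i, j, k, hij, hjk, hk, h1, h2⟩

theorem del_exists {d : ℕ} {π : List ℕ} (hπ : IsPermList π) (hc : contains123 π) :
    ∃ σ, Del d π σ := by
  obtain ⟨i, j, k, hij, hjk, hk, h1, h2⟩ := hc
  have hnd : (π.eraseIdx (pick d i j k)).Nodup :=
    (permList_nodup hπ).sublist (List.eraseIdx_sublist _ _)
  exact ⟨renumber _, hπ, renumber_isPermList hnd, i, j, k, hij, hjk, hk, h1, h2,
    renumber_ordIso⟩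

theorem del_diamond {d : ℕ} {π σ₁ σ₂ : List ℕ} (h1 : Del d π σ₁) (h2 : Del d π σ₂) :
    σ₁ = σ₂ ∨ ∃ τ, Del d σ₁ τ ∧ Del d σ₂ τ := by
  obtain ⟨hπ, hσ₁, i, j, k, hij, hjk, hk, hv1, hv2, hoi1⟩ := h1
  obtain ⟨_, hσ₂, i', j', k', hij', hjk', hk', hv1', hv2', hoi2⟩ := h2
  have he_lt : pick d i j k < π.length := pick_lt_length hij hjk hk
  have he'_lt : pick d i' j' k' < π.length := pick_lt_length hij' hjk' hk'
  by_cases heq : pick d i j k = pick d i' j' k'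
  · left
    rw [← heq] at hoi2
    exact permList_unique hσ₁ hσ₂ (ordIso_trans (ordIso_symm hoi1) hoi2)
  · right
    obtain ⟨p, q, r, hpq, hqr, hr, hw1, hw2, hpick, hp1, hq1, hr1⟩ :=
      find_triple hij hjk hk hv1 hv2 hij' hjk' hk' hv1' hv2' heq
    obtain ⟨p2, q2, r2, hpq2, hqr2, hr2, hw12, hw22, hpick2, hp2, hq2, hr2'⟩ :=
      find_triple hij' hjk' hk' hv1' hv2' hij hjk hk hv1 hv2 (Ne.symm heq)
    generalize hE : pick d i j k = e at hoi1 heq hpick2 hp1 hq1 hr1 he_lt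
    generalize hE' : pick d i' j' k' = e' at hoi2 heq hpick hp2 hq2 hr2' he'_lt
    have hL : (π.eraseIdx e).eraseIdx (adj e e') = (π.eraseIdx e').eraseIdx (adj e' e) := by
      rcases Nat.lt_or_ge e' e with hlt | hge
      · have ha1 : adj e e' = e' := by unfold adj; rw [if_pos hlt]
        have ha2 : adj e' e = e - 1 := by unfold adj; rw [if_neg (by omega)]
        rw [ha1, ha2, eraseIdx_eraseIdx π e e' hlt]
      · have hlt : e < e' := by omega
        have ha1 : adj e e' = e' - 1 := by unfold adj; rw [if_neg (by omega)]
        have ha2 : adj e' e = e := by unfold adj; rw [if_pos hlt]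
        rw [ha1, ha2, ← eraseIdx_eraseIdx π e' e hlt]
    have hnodup : ((π.eraseIdx e).eraseIdx (adj e e')).Nodup :=
      ((permList_nodup hπ).sublist (List.eraseIdx_sublist _ _)).sublist
        (List.eraseIdx_sublist _ _)
    refine ⟨renumber ((π.eraseIdx e).eraseIdx (adj e e')), ?_, ?_⟩
    · refine ⟨hσ₁, renumber_isPermList hnodup, adj e p, adj e q, adj e r,
        adj_mono hpq hp1 hq1, adj_mono hqr hq1 hr1, ?_, ?_, ?_, ?_⟩
      · rw [← hoi1.1]
        exact adj_lt_length hr hr1 he_lt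
      · have b1 : adj e p < (π.eraseIdx e).length := adj_lt_length (by omega) hp1 he_lt
        have b2 : adj e q < (π.eraseIdx e).length := adj_lt_length (by omega) hq1 he_lt
        refine (hoi1.2 _ _ b1 b2).mp ?_
        rw [getD_eraseIdx_ne (by omega) hp1 he_lt, getD_eraseIdx_ne (by omega) hq1 he_lt]
        exact hw1
      · have b1 : adj e q < (π.eraseIdx e).length := adj_lt_length (by omega) hq1 he_lt
        have b2 : adj e r < (π.eraseIdx e).length := adj_lt_length hr hr1 he_lt
        refine (hoi1.2 _ _ b1 b2).mp ?_
        rw [getD_eraseIdx_ne (by omega) hq1 he_lt, getD_eraseIdx_ne hr hr1 he_lt]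
        exact hw2
      · rw [pick_adj, hpick]
        have h3 : OrdIso (σ₁.eraseIdx (adj e e')) ((π.eraseIdx e).eraseIdx (adj e e')) :=
          ordIso_eraseIdx (ordIso_symm hoi1) _
        exact ordIso_trans h3 renumber_ordIso
    · refine ⟨hσ₂, renumber_isPermList hnodup, adj e' p2, adj e' q2, adj e' r2,
        adj_mono hpq2 hp2 hq2, adj_mono hqr2 hq2 hr2', ?_, ?_, ?_, ?_⟩
      · rw [← hoi2.1]
        exact adj_lt_length hr2 hr2' he'_lt
      · have b1 : adj e' p2 < (π.eraseIdx e').length := adj_lt_length (by omega) hp2 he'_lt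
        have b2 : adj e' q2 < (π.eraseIdx e').length := adj_lt_length (by omega) hq2 he'_lt
        refine (hoi2.2 _ _ b1 b2).mp ?_
        rw [getD_eraseIdx_ne (by omega) hp2 he'_lt, getD_eraseIdx_ne (by omega) hq2 he'_lt]
        exact hw12
      · have b1 : adj e' q2 < (π.eraseIdx e').length := adj_lt_length (by omega) hq2 he'_lt
        have b2 : adj e' r2 < (π.eraseIdx e').length := adj_lt_length hr2 hr2' he'_lt
        refine (hoi2.2 _ _ b1 b2).mp ?_
        rw [getD_eraseIdx_ne (by omega) hq2 he'_lt, getD_eraseIdx_ne hr2 hr2' he'_lt]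
        exact hw22
      · rw [pick_adj, hpick2]
        have h3 : OrdIso (σ₂.eraseIdx (adj e' e)) ((π.eraseIdx e').eraseIdx (adj e' e)) :=
          ordIso_eraseIdx (ordIso_symm hoi2) _
        rw [← hL] at h3
        exact ordIso_trans h3 renumber_ordIso

end Aux

namespace Aux

theorem del_normalize (d : ℕ) : ∀ n (π : List ℕ), π.length ≤ n → IsPermList π →
    ∃ τ, IsPermList τ ∧ ¬ contains123 τ ∧ Relation.ReflTransGen (Del d) π τ := by
  intro n
  induction n with
  | zero =>
    intro π hlen hπ
    refine ⟨π, hπ, ?_, .refl⟩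
    rintro ⟨i, j, k, _, _, hk, _, _⟩
    omega
  | succ n ih =>
    intro π hlen hπ
    by_cases hc : contains123 π
    · obtain ⟨σ, hσ⟩ := del_exists (d := d) hπ hc
      have hlt := del_length hσ
      obtain ⟨τ, h1, h2, h3⟩ := ih σ (by omega) hσ.2.1
      exact ⟨τ, h1, h2, .head hσ h3⟩
    · exact ⟨π, hπ, hc, .refl⟩

theorem del_normal_eq {d : ℕ} {τ c : List ℕ} (h : Relation.ReflTransGen (Del d) τ c)
    (hn : ¬ contains123 τ) : c = τ := by
  rcases h.cases_head with rfl | ⟨c', hstep, _⟩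
  · rfl
  · exact absurd (del_contains hstep) hn

theorem del_cr {d : ℕ} : ∀ (a b c : List ℕ), Del d a b → Del d a c →
    ∃ e, Relation.ReflGen (Del d) b e ∧ Relation.ReflTransGen (Del d) c e := by
  intro a b c h1 h2
  rcases del_diamond h1 h2 with heq | ⟨τ, hbτ, hcτ⟩
  · subst heq
    exact ⟨b, .refl, .refl⟩
  · exact ⟨τ, .single hbτ, .single hcτ⟩

theorem rtg_join {d : ℕ} : ∀ {x y : List ℕ},
    Relation.ReflTransGen (fun τ υ => Del d τ υ ∨ Del d υ τ) x y →
    ∃ c, Relation.ReflTransGen (Del d) x c ∧ Relation.ReflTransGen (Del d) y c := by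
  intro x y h
  induction h with
  | refl => exact ⟨x, .refl, .refl⟩
  | tail h1 h2 ih =>
    obtain ⟨c, hxc, hzc⟩ := ih
    rcases h2 with hs | hs
    · obtain ⟨c', hcc', hυc'⟩ :=
        Relation.church_rosser del_cr hzc (Relation.ReflTransGen.single hs)
      exact ⟨c', hxc.trans hcc', hυc'⟩
    · exact ⟨c, hxc, .head hs hzc⟩

theorem main_classes {β : SPat} {d : ℕ}
    (Hf : ∀ {π σ : List ℕ}, IsPermList π → IsResult pat123 β π σ → Del d π σ)
    (Hb : ∀ {π σ : List ℕ}, Del d π σ → IsResult pat123 β π σ)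
    {π : List ℕ} (hπ : IsPermList π) :
    ∃! τ : List ℕ, IsPermList τ ∧ ¬ contains123 τ ∧ PermEquiv pat123 β π τ := by
  have bridge_b : ∀ {x y : List ℕ},
      Relation.ReflTransGen (fun τ υ => Del d τ υ ∨ Del d υ τ) x y →
      PermEquiv pat123 β x y := by
    intro x y h
    induction h with
    | refl => exact Relation.ReflTransGen.refl
    | tail h1 h2 ih =>
      refine Relation.ReflTransGen.tail ih ?_
      rcases h2 with hs | hs
      · exact Or.inl (Hb hs)
      · exact Or.inr (isResult_symm hs.1 (Hb hs))
  have bridge_f : ∀ {x y : List ℕ}, PermEquiv pat123 β x y → IsPermList x →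
      IsPermList y ∧ Relation.ReflTransGen (fun τ υ => Del d τ υ ∨ Del d υ τ) x y := by
    intro x y h
    induction h with
    | refl => exact fun hx => ⟨hx, .refl⟩
    | tail h1 h2 ih =>
      intro hx
      obtain ⟨hb, hrtg⟩ := ih hx
      rcases h2 with hs | hs
      · exact ⟨isResult_perm₂ hs, hrtg.tail (Or.inl (Hf hb hs))⟩
      · have hc := isResult_perm₂ hs
        exact ⟨hc, hrtg.tail (Or.inr (Hf hc (isResult_symm hb hs)))⟩
  obtain ⟨τ, hτp, hτn, hτr⟩ := del_normalize d π.length π (le_refl _) hπ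
  have hmono : ∀ x y : List ℕ, Del d x y → (Del d x y ∨ Del d y x) := fun _ _ h => Or.inl h
  refine ⟨τ, ⟨hτp, hτn, bridge_b (Relation.ReflTransGen.mono hmono _ _ hτr)⟩, ?_⟩
  rintro τ' ⟨hτ'p, hτ'n, hτ'r⟩
  have h1 := (bridge_f hτ'r hπ).2
  have h2 := Relation.ReflTransGen.mono hmono _ _ hτr
  have hsymm : Symmetric (fun τ υ : List ℕ => Del d τ υ ∨ Del d υ τ) :=
    fun x y h => h.elim Or.inr Or.inl
  have h3 := (show Relation.ReflTransGen (fun τ υ : List ℕ => Del d τ υ ∨ Del d υ τ) τ' π by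
    haveI : Std.Symm (fun τ υ : List ℕ => Del d τ υ ∨ Del d υ τ) := ⟨fun a b h => hsymm h⟩
    exact Std.Symm.symm _ _ h1).trans h2
  obtain ⟨c, hc1, hc2⟩ := rtg_join h3
  exact (del_normal_eq hc1 hτ'n).symm.trans (del_normal_eq hc2 hτn)

end Aux

/-- for `β ∈ {12★, 1★3, ★23}`, under `123 ↔ β` every equivalence
class contains exactly one `123`-avoiding permutation. -/
theorem dropOnly_classes :
    ∀ β ∈ ([pat12S, pat1S3, patS23] : List SPat),
    ∀ π : List ℕ, IsPermList π →
      ∃! τ : List ℕ, IsPermList τ ∧ ¬ contains123 τ ∧ PermEquiv pat123 β π τ := by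
  intro β hβ π hπ
  simp only [List.mem_cons, List.not_mem_nil, or_false] at hβ
  rcases hβ with rfl | rfl | rfl
  · exact Aux.main_classes (fun {a b} h1 h2 => Aux.isResult_del_12S h1 h2)
      (fun {a b} h => Aux.del_isResult_12S h) hπ
  · exact Aux.main_classes (fun {a b} h1 h2 => Aux.isResult_del_1S3 h1 h2)
      (fun {a b} h => Aux.del_isResult_1S3 h) hπ
  · exact Aux.main_classes (fun {a b} h1 h2 => Aux.isResult_del_S23 h1 h2)
      (fun {a b} h => Aux.del_isResult_S23 h) hπ
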